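/- Let a ∈ ℝ, 1 < p < ∞, 1 ≤ q, r ≤ ∞, and let p' and q' be the conjugate exponents of p and q. Let E ⊆ Ω be measurable with μ(E) < ∞. Then: (1) if Σ_{u≥-1} 2^{uaq} μ(A_u ∩ E)^{q/p} < ∞ (with the sup-modification when q = ∞), then ‖χ_E‖*_{HL^{a,r}_{p,q}} < ∞; and (2) if Σ_{u≥-1} 2^{-uaq'} μ(A_u ∩ E)^{q'/p'} < ∞ (with the sup-modification when q' = ∞), then there exists a finite constant C_E such that ∫_E f dμ ≤ C_E ‖f‖*_{HL^{a,r}_{p,q}} for every nonnegative measurable f on Ω. Consequently, under (1) and (2) the functional ‖·‖*_{HL^{a,r}_{p,q}} is a Banach function norm. -/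

import Mathlib

open MeasureTheory ENNReal Set Filter Topology

noncomputable section

variable {X : Type*}

/-- The decreasing rearrangement `f*` of `f` with respect to `μ` :
`f*(s) = inf {α ≥ 0 : μ({x : |f(x)| > α}) ≤ s}`. -/
def rearr [MeasurableSpace X] (μ : Measure X) (f : X → ℝ) (s : ℝ) : ℝ≥0∞ :=
  sInf {α : ℝ≥0∞ | μ {x | α < ENNReal.ofReal |f x|} ≤ ENNReal.ofReal s}

/-- The averaged (maximal) rearrangement `f**(s) = (1/s)∫_0^s f*(t) dt`. -/
def rearrStar [MeasurableSpace X] (μ : Measure X) (f : X → ℝ) (s : ℝ) : ℝ≥0∞ :=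
  (ENNReal.ofReal s)⁻¹ * ∫⁻ t in Set.Ioc (0 : ℝ) s, rearr μ f t

/-- The Lorentz functional built from a rearrangement-type function `R`:
`(∫_0^∞ (t^{1/p} R(t))^r dt/t)^{1/r}` for `r < ∞`, and `sup_{t>0} t^{1/p} R(t)`
for `r = ∞` (when `p = ∞`, `1/p` is interpreted as `0`, which for `R = f*`
recovers the essential supremum of `|f|`). -/
def lorentzNormOf (R : ℝ → ℝ≥0∞) (p r : ℝ≥0∞) : ℝ≥0∞ :=
  if r = ∞ then ⨆ t : {t : ℝ // 0 < t}, ENNReal.ofReal (t.1 ^ p.toReal⁻¹) * R t.1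
  else (∫⁻ t in Set.Ioi (0 : ℝ),
      (ENNReal.ofReal (t ^ p.toReal⁻¹) * R t) ^ r.toReal / ENNReal.ofReal t) ^ r.toReal⁻¹

/-- The Lorentz quasi-norm `‖f‖_{L^{p,r}}`. -/
def lorentzNorm [MeasurableSpace X] (μ : Measure X) (p r : ℝ≥0∞) (f : X → ℝ) : ℝ≥0∞ :=
  lorentzNormOf (rearr μ f) p r

/-- The Lorentz norm `‖f‖*_{L^{p,r}}`, with `f*` replaced by `f**`. -/
def lorentzNormStar [MeasurableSpace X] (μ : Measure X) (p r : ℝ≥0∞) (f : X → ℝ) : ℝ≥0∞ :=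
  lorentzNormOf (rearrStar μ f) p r

/-- The annuli `A_u`, `u ≥ -1`:  `A_{-1} = {x ∈ Ω : |x| < 1/2}` and, for `u ≥ 0`,
`A_u = {x ∈ Ω : 2^{u-1} ≤ |x| < 2^u}`. -/
def annulus [Norm X] (Ω : Set X) (u : ℤ) : Set X :=
  if u = -1 then {x ∈ Ω | ‖x‖ < 1 / 2}
  else {x ∈ Ω | (2 : ℝ) ^ (u - 1) ≤ ‖x‖ ∧ ‖x‖ < (2 : ℝ) ^ u}

/-- The Herz-type functional built from a functional `L` on the blocks:
`(Σ_{u ≥ -1} (2^{ua} L(f χ_{A_u}))^q)^{1/q}` for `q < ∞`, with the sup-modification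
for `q = ∞`. -/
def herzNormWith {E : Type*} [Norm X] [Zero E] (Ω : Set X) (a : ℝ) (q : ℝ≥0∞)
    (L : (X → E) → ℝ≥0∞) (f : X → E) : ℝ≥0∞ :=
  if q = ∞ then
    ⨆ u : {u : ℤ // -1 ≤ u},
      ENNReal.ofReal ((2 : ℝ) ^ ((u.1 : ℝ) * a)) * L ((annulus Ω u.1).indicator f)
  else (∑' u : {u : ℤ // -1 ≤ u},
      (ENNReal.ofReal ((2 : ℝ) ^ ((u.1 : ℝ) * a)) * L ((annulus Ω u.1).indicator f)) ^ q.toReal)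
      ^ q.toReal⁻¹

/-- The non-homogeneous Lorentz–Herz quasi-norm `‖f‖_{HL^{a,r}_{p,q}}`. -/
def herzNorm [MeasurableSpace X] [Norm X] (μ : Measure X) (Ω : Set X) (a : ℝ)
    (p q r : ℝ≥0∞) (f : X → ℝ) : ℝ≥0∞ :=
  herzNormWith Ω a q (lorentzNorm μ p r) f

/-- The non-homogeneous Lorentz–Herz norm `‖f‖*_{HL^{a,r}_{p,q}}`, built from the
Lorentz norms `‖·‖*_{L^{p,r}}`. -/
def herzNormStar [MeasurableSpace X] [Norm X] (μ : Measure X) (Ω : Set X) (a : ℝ)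
    (p q r : ℝ≥0∞) (f : X → ℝ) : ℝ≥0∞ :=
  herzNormWith Ω a q (lorentzNormStar μ p r) f

/-- The conjugate exponent: `1/p + 1/p' = 1`, with `1' = ∞` and `∞' = 1`. -/
def conjExp (p : ℝ≥0∞) : ℝ≥0∞ :=
  if p = 1 then ∞ else if p = ∞ then 1 else ENNReal.ofReal (p.toReal / (p.toReal - 1))

/-- The quantity `(Σ_{u≥-1} (2^{ua} μ(A_u ∩ E)^{1/p})^q)^{(of the summands)}`,
i.e. `Σ_{u≥-1} 2^{uaq} μ(A_u ∩ E)^{q/p}` for `q < ∞`, with the sup-modification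
for `q = ∞`. -/
def herzSetNorm [MeasurableSpace X] [Norm X] (μ : Measure X) (Ω : Set X) (a : ℝ)
    (p q : ℝ≥0∞) (E : Set X) : ℝ≥0∞ :=
  if q = ∞ then
    ⨆ u : {u : ℤ // -1 ≤ u},
      ENNReal.ofReal ((2 : ℝ) ^ ((u.1 : ℝ) * a)) * μ (annulus Ω u.1 ∩ E) ^ p.toReal⁻¹
  else ∑' u : {u : ℤ // -1 ≤ u},
      (ENNReal.ofReal ((2 : ℝ) ^ ((u.1 : ℝ) * a)) * μ (annulus Ω u.1 ∩ E) ^ p.toReal⁻¹) ^ q.toReal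

/-- The Peetre K-functional for the couple of quasi-normed function spaces
determined by the functionals `n₀`, `n₁`. -/
def Kfun [MeasurableSpace X] (n₀ n₁ : (X → ℝ) → ℝ≥0∞) (t : ℝ) (f : X → ℝ) : ℝ≥0∞ :=
  ⨅ (g : X → ℝ) (_ : Measurable g) (_ : Measurable (f - g)),
    n₀ g + ENNReal.ofReal t * n₁ (f - g)

/-- The real interpolation quasi-norm `‖f‖_{(X₀,X₁)_{θ,q}}`. -/
def interpNorm [MeasurableSpace X] (n₀ n₁ : (X → ℝ) → ℝ≥0∞) (θ : ℝ) (q : ℝ≥0∞)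
    (f : X → ℝ) : ℝ≥0∞ :=
  if q = ∞ then ⨆ t : {t : ℝ // 0 < t}, ENNReal.ofReal (t.1 ^ (-θ)) * Kfun n₀ n₁ t.1 f
  else (∫⁻ t in Set.Ioi (0 : ℝ),
      (ENNReal.ofReal (t ^ (-θ)) * Kfun n₀ n₁ t f) ^ q.toReal / ENNReal.ofReal t) ^ q.toReal⁻¹

/-- Membership in the sum `X₀ + X₁` of the couple determined by `n₀`, `n₁`. -/
def inSum [MeasurableSpace X] (n₀ n₁ : (X → ℝ) → ℝ≥0∞) (f : X → ℝ) : Prop :=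
  ∃ g : X → ℝ, Measurable g ∧ Measurable (f - g) ∧ n₀ g < ∞ ∧ n₁ (f - g) < ∞

end
abbrev Euc (N : ℕ) : Type := EuclideanSpace ℝ (Fin N)

noncomputable section Aux
open MeasureTheory ENNReal Set

variable {X : Type*} [MeasurableSpace X] {μ : Measure X} {f : X → ℝ}

lemma rearr_antitone : Antitone (rearr μ f) := fun _ _ hst =>
  sInf_le_sInf (fun _ hα => le_trans hα (ENNReal.ofReal_le_ofReal hst))

lemma le_rearr_of_lt {t : ℝ} {α : ℝ≥0∞}
    (h : ENNReal.ofReal t < μ {x | α < ENNReal.ofReal |f x|}) : α ≤ rearr μ f t := by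
  refine le_sInf fun β hβ => ?_
  by_contra hc
  push_neg at hc
  exact absurd (le_trans (measure_mono fun x hx => lt_trans hc hx) hβ) (not_le.2 h)

lemma rearr_le {t : ℝ} {α : ℝ≥0∞}
    (h : μ {x | α < ENNReal.ofReal |f x|} ≤ ENNReal.ofReal t) : rearr μ f t ≤ α := sInf_le h

lemma rearr_measurable : Measurable (rearr μ f) := rearr_antitone.measurable

lemma setLIntegral_mono_nomeas {s : Set ℝ} (hs : MeasurableSet s) {g h : ℝ → ℝ≥0∞}
    (hgh : ∀ x ∈ s, g x ≤ h x) :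
    ∫⁻ x in s, g x ≤ ∫⁻ x in s, h x := by
  rw [← lintegral_indicator hs g, ← lintegral_indicator hs h]
  refine lintegral_mono fun x => ?_
  by_cases hx : x ∈ s
  · simpa [Set.indicator_of_mem hx] using hgh x hx
  · simp [Set.indicator_of_notMem hx]

lemma mul_rearr_le_lintegral {t : ℝ} (ht : 0 < t) :
    ENNReal.ofReal t * rearr μ f t ≤ ∫⁻ s in Set.Ioc (0:ℝ) t, rearr μ f s := by
  have h := setLIntegral_mono_nomeas (s := Set.Ioc (0:ℝ) t) measurableSet_Ioc
    (g := fun _ => rearr μ f t) (h := rearr μ f) (fun x hx => rearr_antitone hx.2)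
  calc ENNReal.ofReal t * rearr μ f t
      = ∫⁻ _ in Set.Ioc (0:ℝ) t, rearr μ f t := by
        rw [setLIntegral_const, Real.volume_Ioc, sub_zero, mul_comm]
    _ ≤ _ := h

lemma rearr_le_rearrStar {t : ℝ} (ht : 0 < t) : rearr μ f t ≤ rearrStar μ f t := by
  have h := mul_rearr_le_lintegral (μ := μ) (f := f) ht
  have h0 : ENNReal.ofReal t ≠ 0 := (ENNReal.ofReal_pos.2 ht).ne'
  calc rearr μ f t = (ENNReal.ofReal t)⁻¹ * (ENNReal.ofReal t * rearr μ f t) := by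
        rw [← mul_assoc, ENNReal.inv_mul_cancel h0 ENNReal.ofReal_ne_top, one_mul]
    _ ≤ rearrStar μ f t := mul_le_mul_right h _

lemma rearrStar_antitone {s t : ℝ} (hs : 0 < s) (hst : s ≤ t) :
    rearrStar μ f t ≤ rearrStar μ f s := by
  have hA0 : ENNReal.ofReal s ≠ 0 := (ENNReal.ofReal_pos.2 hs).ne'
  have hB0 : ENNReal.ofReal t ≠ 0 := (ENNReal.ofReal_pos.2 (hs.trans_le hst)).ne'
  have hsplit : ∫⁻ y in Set.Ioc (0:ℝ) t, rearr μ f y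
      = (∫⁻ y in Set.Ioc (0:ℝ) s, rearr μ f y) + ∫⁻ y in Set.Ioc s t, rearr μ f y := by
    rw [← Set.Ioc_union_Ioc_eq_Ioc hs.le hst,
      lintegral_union measurableSet_Ioc (Set.Ioc_disjoint_Ioc_of_le le_rfl)]
  have h2 : ∫⁻ y in Set.Ioc s t, rearr μ f y ≤ ENNReal.ofReal (t - s) * rearr μ f s := by
    calc ∫⁻ y in Set.Ioc s t, rearr μ f y ≤ ∫⁻ _ in Set.Ioc s t, rearr μ f s :=
          setLIntegral_mono_nomeas measurableSet_Ioc (fun x hx => rearr_antitone hx.1.le)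
      _ = ENNReal.ofReal (t - s) * rearr μ f s := by
          rw [setLIntegral_const, Real.volume_Ioc, mul_comm]
  have h3 : rearr μ f s ≤ (ENNReal.ofReal s)⁻¹ * ∫⁻ y in Set.Ioc (0:ℝ) s, rearr μ f y :=
    rearr_le_rearrStar hs
  have key : ∫⁻ y in Set.Ioc (0:ℝ) t, rearr μ f y
      ≤ (ENNReal.ofReal t * (ENNReal.ofReal s)⁻¹) * ∫⁻ y in Set.Ioc (0:ℝ) s, rearr μ f y := by
    calc ∫⁻ y in Set.Ioc (0:ℝ) t, rearr μ f y
        ≤ (∫⁻ y in Set.Ioc (0:ℝ) s, rearr μ f y) +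
            ENNReal.ofReal (t - s) * ((ENNReal.ofReal s)⁻¹ * ∫⁻ y in Set.Ioc (0:ℝ) s, rearr μ f y) := by
          rw [hsplit]
          exact add_le_add_right (h2.trans (mul_le_mul_right h3 _)) _
      _ = (1 + ENNReal.ofReal (t - s) * (ENNReal.ofReal s)⁻¹) *
            ∫⁻ y in Set.Ioc (0:ℝ) s, rearr μ f y := by ring
      _ = _ := by
          congr 1
          rw [← ENNReal.mul_inv_cancel hA0 ENNReal.ofReal_ne_top, ← add_mul]
          congr 1
          rw [← ENNReal.ofReal_add hs.le (by linarith), add_sub_cancel]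
  calc rearrStar μ f t
      = (ENNReal.ofReal t)⁻¹ * ∫⁻ y in Set.Ioc (0:ℝ) t, rearr μ f y := rfl
    _ ≤ (ENNReal.ofReal t)⁻¹ *
          ((ENNReal.ofReal t * (ENNReal.ofReal s)⁻¹) * ∫⁻ y in Set.Ioc (0:ℝ) s, rearr μ f y) :=
        mul_le_mul_right key _
    _ = rearrStar μ f s := by
        rw [← mul_assoc, ← mul_assoc, ENNReal.inv_mul_cancel hB0 ENNReal.ofReal_ne_top, one_mul]
        rfl

end Aux

noncomputable section Aux2
open MeasureTheory ENNReal Set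

variable {X : Type*} [MeasurableSpace X] {μ : Measure X}

lemma ofReal_half : ENNReal.ofReal (1/2 : ℝ) = 2⁻¹ := by
  rw [one_div, ENNReal.ofReal_inv_of_pos two_pos]
  norm_num

lemma two_rpow_ne_top {e : ℝ} (he : 0 ≤ e) : ((2:ℝ≥0∞)) ^ e ≠ ∞ :=
  (ENNReal.rpow_lt_top_of_nonneg he (by norm_num)).ne

lemma one_le_two_rpow {e : ℝ} (he : 0 ≤ e) : (1:ℝ≥0∞) ≤ 2 ^ e := by
  calc (1:ℝ≥0∞) = 2 ^ (0:ℝ) := by rw [ENNReal.rpow_zero]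
    _ ≤ 2 ^ e := ENNReal.rpow_le_rpow_of_exponent_le one_le_two he

lemma weak_le_lorentzNormStar {p r : ℝ≥0∞} (hp : p ≠ ∞) (hr : 1 ≤ r)
    (g : X → ℝ) {t : ℝ} (ht : 0 < t) :
    ENNReal.ofReal (t ^ p.toReal⁻¹) * rearrStar μ g t
      ≤ (2:ℝ≥0∞) ^ (p.toReal⁻¹ + r.toReal⁻¹) * lorentzNormStar μ p r g := by
  have hip : (0:ℝ) ≤ p.toReal⁻¹ := inv_nonneg.2 ENNReal.toReal_nonneg
  have hirt : (0:ℝ) ≤ r.toReal⁻¹ := inv_nonneg.2 ENNReal.toReal_nonneg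
  by_cases hrtop : r = ∞
  · have hN : lorentzNormStar μ p r g
        = ⨆ s : {s : ℝ // 0 < s}, ENNReal.ofReal (s.1 ^ p.toReal⁻¹) * rearrStar μ g s.1 := by
      rw [lorentzNormStar, lorentzNormOf, if_pos hrtop]
    calc ENNReal.ofReal (t ^ p.toReal⁻¹) * rearrStar μ g t
        ≤ lorentzNormStar μ p r g := by
          rw [hN]
          exact le_iSup (fun s : {s : ℝ // 0 < s} =>
            ENNReal.ofReal (s.1 ^ p.toReal⁻¹) * rearrStar μ g s.1) ⟨t, ht⟩
      _ = 1 * lorentzNormStar μ p r g := (one_mul _).symm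
      _ ≤ _ := mul_le_mul_left (one_le_two_rpow (add_nonneg hip hirt)) _
  · have hrt1 : (1:ℝ) ≤ r.toReal := by
      rw [← ENNReal.toReal_one]
      exact (ENNReal.toReal_le_toReal ENNReal.one_ne_top hrtop).2 hr
    have hrt0 : (0:ℝ) < r.toReal := lt_of_lt_of_le one_pos hrt1
    have hN : lorentzNormStar μ p r g
        = (∫⁻ s in Set.Ioi (0:ℝ),
            (ENNReal.ofReal (s ^ p.toReal⁻¹) * rearrStar μ g s) ^ r.toReal
              / ENNReal.ofReal s) ^ r.toReal⁻¹ := by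
      rw [lorentzNormStar, lorentzNormOf, if_neg hrtop]
    set Xv := ENNReal.ofReal ((t/2) ^ p.toReal⁻¹) * rearrStar μ g t with hXv
    have ht2 : 0 < t / 2 := half_pos ht
    have key : Xv ^ r.toReal * ENNReal.ofReal (1/2)
        ≤ ∫⁻ s in Set.Ioi (0:ℝ),
            (ENNReal.ofReal (s ^ p.toReal⁻¹) * rearrStar μ g s) ^ r.toReal
              / ENNReal.ofReal s := by
      have hsub : Set.Ioc (t/2) t ⊆ Set.Ioi (0:ℝ) := fun x hx => ht2.trans hx.1
      have step1 : ∫⁻ s in Set.Ioc (t/2) t,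
          (ENNReal.ofReal (s ^ p.toReal⁻¹) * rearrStar μ g s) ^ r.toReal / ENNReal.ofReal s
          ≤ ∫⁻ s in Set.Ioi (0:ℝ),
            (ENNReal.ofReal (s ^ p.toReal⁻¹) * rearrStar μ g s) ^ r.toReal
              / ENNReal.ofReal s :=
        lintegral_mono' (Measure.restrict_mono hsub le_rfl) le_rfl
      refine le_trans ?_ step1
      have step2 : ∀ s ∈ Set.Ioc (t/2) t,
          Xv ^ r.toReal / ENNReal.ofReal t
            ≤ (ENNReal.ofReal (s ^ p.toReal⁻¹) * rearrStar μ g s) ^ r.toReal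
                / ENNReal.ofReal s := by
        intro s hs
        refine ENNReal.div_le_div ?_ (ENNReal.ofReal_le_ofReal hs.2)
        refine ENNReal.rpow_le_rpow ?_ hrt0.le
        exact mul_le_mul' (ENNReal.ofReal_le_ofReal
            (Real.rpow_le_rpow ht2.le hs.1.le hip))
          (rearrStar_antitone (ht2.trans hs.1) hs.2)
      have hsplit2 : ENNReal.ofReal (t/2) = ENNReal.ofReal t * ENNReal.ofReal (1/2) := by
        rw [← ENNReal.ofReal_mul ht.le]
        congr 1
        ring
      calc Xv ^ r.toReal * ENNReal.ofReal (1/2)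
          = Xv ^ r.toReal / ENNReal.ofReal t * ENNReal.ofReal (t/2) := by
            rw [hsplit2, ← mul_assoc,
              ENNReal.div_mul_cancel (ENNReal.ofReal_pos.2 ht).ne' ENNReal.ofReal_ne_top]
        _ = ∫⁻ _ in Set.Ioc (t/2) t, Xv ^ r.toReal / ENNReal.ofReal t := by
            rw [setLIntegral_const, Real.volume_Ioc, _root_.sub_half]
        _ ≤ _ := setLIntegral_mono_nomeas measurableSet_Ioc step2
    -- turn key into Xv ≤ 2^(1/rt) * norm
    have h2J : Xv ^ r.toReal ≤ 2 * ∫⁻ s in Set.Ioi (0:ℝ),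
        (ENNReal.ofReal (s ^ p.toReal⁻¹) * rearrStar μ g s) ^ r.toReal
          / ENNReal.ofReal s := by
      calc Xv ^ r.toReal = 2 * (Xv ^ r.toReal * ENNReal.ofReal (1/2)) := by
            rw [ofReal_half, mul_comm (Xv ^ r.toReal), ← mul_assoc,
              ENNReal.mul_inv_cancel (by norm_num) (by norm_num), one_mul]
        _ ≤ _ := mul_le_mul_right key _
    have hXvle : Xv ≤ (2:ℝ≥0∞) ^ r.toReal⁻¹ * lorentzNormStar μ p r g := by
      rw [hN]
      calc Xv = (Xv ^ r.toReal) ^ r.toReal⁻¹ := (ENNReal.rpow_rpow_inv hrt0.ne' _).symm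
        _ ≤ (2 * ∫⁻ s in Set.Ioi (0:ℝ),
              (ENNReal.ofReal (s ^ p.toReal⁻¹) * rearrStar μ g s) ^ r.toReal
                / ENNReal.ofReal s) ^ r.toReal⁻¹ :=
            ENNReal.rpow_le_rpow h2J (inv_nonneg.2 hrt0.le)
        _ = _ := by rw [ENNReal.mul_rpow_of_nonneg _ _ (inv_nonneg.2 hrt0.le)]
    have hsplit : ENNReal.ofReal (t ^ p.toReal⁻¹) = (2:ℝ≥0∞) ^ p.toReal⁻¹
        * ENNReal.ofReal ((t/2) ^ p.toReal⁻¹) := by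
      have ht' : t = 2 * (t/2) := by ring
      rw [show t ^ p.toReal⁻¹ = 2 ^ p.toReal⁻¹ * (t/2) ^ p.toReal⁻¹ by
        rw [← Real.mul_rpow (by norm_num) ht2.le, ← ht'], ENNReal.ofReal_mul
          (Real.rpow_nonneg (by norm_num) _)]
      congr 1
      rw [← ENNReal.ofReal_rpow_of_pos two_pos]
      norm_num
    calc ENNReal.ofReal (t ^ p.toReal⁻¹) * rearrStar μ g t
        = (2:ℝ≥0∞) ^ p.toReal⁻¹ * Xv := by rw [hsplit, hXv, mul_assoc]
      _ ≤ (2:ℝ≥0∞) ^ p.toReal⁻¹ * ((2:ℝ≥0∞) ^ r.toReal⁻¹ * lorentzNormStar μ p r g) :=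
          mul_le_mul_right hXvle _
      _ = _ := by rw [← mul_assoc, ← ENNReal.rpow_add _ _ (by norm_num) (by norm_num)]

lemma dist_le_weak {p : ℝ≥0∞} (hp1 : 1 < p) (hp : p ≠ ∞) (g : X → ℝ) {l : ℝ} (hl : 0 < l) :
    μ {x | ENNReal.ofReal l < ENNReal.ofReal |g x|}
      ≤ (lorentzNormStar μ p ∞ g / ENNReal.ofReal l) ^ p.toReal := by
  set W := lorentzNormStar μ p ∞ g with hW
  have hP : (1:ℝ) < p.toReal := by
    rw [← ENNReal.toReal_one]
    exact (ENNReal.toReal_lt_toReal ENNReal.one_ne_top hp).2 hp1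
  have hP0 : (0:ℝ) < p.toReal := lt_trans one_pos hP
  have hweak : ∀ s : ℝ, 0 < s → ENNReal.ofReal (s ^ p.toReal⁻¹) * rearrStar μ g s ≤ W := by
    intro s hs
    rw [hW, lorentzNormStar, lorentzNormOf, if_pos rfl]
    exact le_iSup (fun s : {s : ℝ // 0 < s} =>
      ENNReal.ofReal (s.1 ^ p.toReal⁻¹) * rearrStar μ g s.1) ⟨s, hs⟩
  by_contra hc
  push_neg at hc
  obtain ⟨r0, hr0nn, h1, h2⟩ := ENNReal.lt_iff_exists_real_btwn.1 hc
  have hr0pos : (0:ℝ) < r0 := ENNReal.ofReal_pos.1 (lt_of_le_of_lt (zero_le) h1)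
  have hα : ENNReal.ofReal l ≤ rearr μ g r0 := le_rearr_of_lt h2
  have hup : ENNReal.ofReal (r0 ^ p.toReal⁻¹) * ENNReal.ofReal l ≤ W :=
    le_trans (mul_le_mul_right (hα.trans (rearr_le_rearrStar hr0pos)) _) (hweak r0 hr0pos)
  have hlt : W / ENNReal.ofReal l < ENNReal.ofReal (r0 ^ p.toReal⁻¹) := by
    have := ENNReal.rpow_lt_rpow h1 (inv_pos.2 hP0)
    rwa [← ENNReal.rpow_mul, mul_inv_cancel₀ hP0.ne', ENNReal.rpow_one,
      ENNReal.ofReal_rpow_of_pos hr0pos] at this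
  have : W < ENNReal.ofReal (r0 ^ p.toReal⁻¹) * ENNReal.ofReal l :=
    (ENNReal.div_lt_iff (Or.inl (ENNReal.ofReal_pos.2 hl).ne') (Or.inl ENNReal.ofReal_ne_top)).1 hlt
  exact absurd hup (not_le.2 this)

end Aux2

noncomputable section Aux3
open MeasureTheory ENNReal Set

variable {X : Type*} [MeasurableSpace X] {μ : Measure X}

lemma lintegral_Ioi_rpow_ofReal {b c : ℝ} (hb : b < -1) (hc : 0 < c) :
    ∫⁻ t in Set.Ioi c, ENNReal.ofReal (t ^ b) = ENNReal.ofReal (c ^ (b+1) / (-b-1)) := by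
  rw [← ofReal_integral_eq_lintegral_ofReal (integrableOn_Ioi_rpow_of_lt hb hc)
    ((ae_restrict_iff' measurableSet_Ioi).2 (Filter.Eventually.of_forall
      fun t ht => Real.rpow_nonneg (le_of_lt (hc.trans ht)) b))]
  rw [integral_Ioi_rpow_of_lt hb hc]
  congr 1
  rw [show -b - 1 = -(b+1) by ring, div_neg, neg_div]

lemma min_integral_bound {m W : ℝ≥0∞} {P : ℝ} (hP : 1 < P) (hm : m ≠ ∞) :
    ∫⁻ t in Set.Ioi (0:ℝ), min m ((W / ENNReal.ofReal t) ^ P)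
      ≤ ENNReal.ofReal (P/(P-1)) * (m ^ (1 - P⁻¹) * W) := by
  have hP0 : (0:ℝ) < P := lt_trans one_pos hP
  have hip1 : P⁻¹ < 1 := by
    rw [inv_lt_one_iff₀]
    right; exact hP
  have hC0 : (0:ℝ) < P/(P-1) := div_pos hP0 (by linarith)
  by_cases hm0 : m = 0
  · calc ∫⁻ t in Set.Ioi (0:ℝ), min m ((W / ENNReal.ofReal t) ^ P)
        ≤ ∫⁻ _ in Set.Ioi (0:ℝ), (0:ℝ≥0∞) := setLIntegral_mono_nomeas measurableSet_Ioi
          (fun t _ => by rw [← hm0] at *; exact min_le_left _ _)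
      _ = 0 := by simp
      _ ≤ _ := zero_le
  by_cases hW0 : W = 0
  · calc ∫⁻ t in Set.Ioi (0:ℝ), min m ((W / ENNReal.ofReal t) ^ P)
        ≤ ∫⁻ _ in Set.Ioi (0:ℝ), (0:ℝ≥0∞) := setLIntegral_mono_nomeas measurableSet_Ioi
          (fun t _ => by
            rw [hW0, ENNReal.zero_div, ENNReal.zero_rpow_of_pos hP0]
            exact min_le_right _ _)
      _ = 0 := by simp
      _ ≤ _ := zero_le
  by_cases hWtop : W = ∞
  · have h1 : m ^ (1 - P⁻¹) ≠ 0 := by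
      simp only [ne_eq, ENNReal.rpow_eq_zero_iff, not_or]
      constructor
      · rintro ⟨h, _⟩; exact hm0 h
      · rintro ⟨h, _⟩; exact hm h
    have : m ^ (1 - P⁻¹) * W = ∞ := by rw [hWtop, ENNReal.mul_top h1]
    rw [this, ENNReal.mul_top (ENNReal.ofReal_pos.2 hC0).ne']
    exact le_top
  -- main case
  have hmpos : 0 < m := pos_iff_ne_zero.2 hm0
  have hWpos : 0 < W := pos_iff_ne_zero.2 hW0
  have hmt : 0 < m.toReal := ENNReal.toReal_pos hm0 hm
  have hWt : 0 < W.toReal := ENNReal.toReal_pos hW0 hWtop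
  set l0 : ℝ := W.toReal / m.toReal ^ P⁻¹ with hl0
  have hl0pos : 0 < l0 := div_pos hWt (Real.rpow_pos_of_pos hmt _)
  have hofl0 : ENNReal.ofReal l0 = W / m ^ P⁻¹ := by
    rw [hl0, ENNReal.ofReal_div_of_pos (Real.rpow_pos_of_pos hmt _), ENNReal.ofReal_toReal hWtop,
      ← ENNReal.ofReal_rpow_of_pos hmt, ENNReal.ofReal_toReal hm]
  have hsplit : Set.Ioi (0:ℝ) = Set.Ioc (0:ℝ) l0 ∪ Set.Ioi l0 :=
    (Set.Ioc_union_Ioi_eq_Ioi hl0pos.le).symm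
  rw [hsplit, lintegral_union measurableSet_Ioi (Set.Ioc_disjoint_Ioi le_rfl)]
  have piece1 : ∫⁻ t in Set.Ioc (0:ℝ) l0, min m ((W / ENNReal.ofReal t) ^ P)
      ≤ m ^ (1 - P⁻¹) * W := by
    calc ∫⁻ t in Set.Ioc (0:ℝ) l0, min m ((W / ENNReal.ofReal t) ^ P)
        ≤ ∫⁻ _ in Set.Ioc (0:ℝ) l0, m :=
          setLIntegral_mono_nomeas measurableSet_Ioc (fun t _ => min_le_left _ _)
      _ = m * ENNReal.ofReal l0 := by rw [setLIntegral_const, Real.volume_Ioc, sub_zero]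
      _ = m ^ (1 - P⁻¹) * W := by
          have hmp0 : m ^ P⁻¹ ≠ 0 := (ENNReal.rpow_pos hmpos hm).ne'
          have hmpt : m ^ P⁻¹ ≠ ∞ :=
            (ENNReal.rpow_lt_top_of_nonneg (inv_nonneg.2 hP0.le) hm).ne
          have hmm : m ^ (1-P⁻¹) * m ^ P⁻¹ = m := by
            rw [← ENNReal.rpow_add _ _ hm0 hm, sub_add_cancel, ENNReal.rpow_one]
          calc m * ENNReal.ofReal l0 = m * (W / m ^ P⁻¹) := by rw [hofl0]
            _ = (m ^ (1-P⁻¹) * m ^ P⁻¹) * (W / m ^ P⁻¹) := by rw [hmm]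
            _ = m ^ (1-P⁻¹) * (W / m ^ P⁻¹ * m ^ P⁻¹) := by ring
            _ = m ^ (1 - P⁻¹) * W := by rw [ENNReal.div_mul_cancel hmp0 hmpt]
  have piece2 : ∫⁻ t in Set.Ioi l0, min m ((W / ENNReal.ofReal t) ^ P)
      ≤ ENNReal.ofReal ((P-1)⁻¹) * (m ^ (1 - P⁻¹) * W) := by
    have hpw : ∀ t ∈ Set.Ioi l0, min m ((W / ENNReal.ofReal t) ^ P)
        ≤ W ^ P * ENNReal.ofReal (t ^ (-P)) := by
      intro t ht
      have htpos : 0 < t := hl0pos.trans ht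
      refine le_trans (min_le_right _ _) (le_of_eq ?_)
      rw [ENNReal.div_rpow_of_nonneg _ _ hP0.le, div_eq_mul_inv]
      congr 1
      rw [ENNReal.ofReal_rpow_of_pos htpos, ← ENNReal.ofReal_inv_of_pos
        (Real.rpow_pos_of_pos htpos _), ← Real.rpow_neg htpos.le]
    calc ∫⁻ t in Set.Ioi l0, min m ((W / ENNReal.ofReal t) ^ P)
        ≤ ∫⁻ t in Set.Ioi l0, W ^ P * ENNReal.ofReal (t ^ (-P)) :=
          setLIntegral_mono_nomeas measurableSet_Ioi hpw
      _ = W ^ P * ∫⁻ t in Set.Ioi l0, ENNReal.ofReal (t ^ (-P)) :=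
          lintegral_const_mul' _ _ (ENNReal.rpow_lt_top_of_nonneg hP0.le hWtop).ne
      _ = W ^ P * ENNReal.ofReal (l0 ^ (-P+1) / (-(-P)-1)) := by
          rw [lintegral_Ioi_rpow_ofReal (by linarith) hl0pos]
      _ = ENNReal.ofReal ((P-1)⁻¹) * (m ^ (1 - P⁻¹) * W) := by
          have e1 : l0 ^ (-P+1) = W.toReal ^ (1-P) * m.toReal ^ (1 - P⁻¹) := by
            have eexp2 : P⁻¹ * -(-P + 1) = 1 - P⁻¹ := by
              have h := inv_mul_cancel₀ hP0.ne'
              linear_combination h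
            rw [hl0, Real.div_rpow hWt.le (Real.rpow_nonneg hmt.le _)]
            rw [div_eq_mul_inv, ← Real.rpow_neg (Real.rpow_nonneg hmt.le _),
              ← Real.rpow_mul hmt.le, eexp2, show -P+1 = 1-P by ring]
          have e2 : -(-P) - 1 = P - 1 := by ring
          rw [e2, e1, div_eq_mul_inv, ENNReal.ofReal_mul (by positivity),
            ENNReal.ofReal_mul (Real.rpow_nonneg hWt.le _)]
          rw [← ENNReal.ofReal_rpow_of_pos hWt, ← ENNReal.ofReal_rpow_of_pos hmt,
            ENNReal.ofReal_toReal hWtop, ENNReal.ofReal_toReal hm]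
          calc W ^ P * (W ^ (1-P) * m ^ (1-P⁻¹) * ENNReal.ofReal (P-1)⁻¹)
              = (W ^ P * W ^ (1-P)) * m ^ (1-P⁻¹) * ENNReal.ofReal (P-1)⁻¹ := by ring
            _ = ENNReal.ofReal (P-1)⁻¹ * (m ^ (1 - P⁻¹) * W) := by
                rw [← ENNReal.rpow_add _ _ hW0 hWtop]
                have : P + (1 - P) = 1 := by ring
                rw [this, ENNReal.rpow_one]
                ring
  calc (∫⁻ t in Set.Ioc (0:ℝ) l0, min m ((W / ENNReal.ofReal t) ^ P))
        + ∫⁻ t in Set.Ioi l0, min m ((W / ENNReal.ofReal t) ^ P)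
      ≤ m ^ (1 - P⁻¹) * W + ENNReal.ofReal ((P-1)⁻¹) * (m ^ (1 - P⁻¹) * W) :=
        add_le_add piece1 piece2
    _ = (1 + ENNReal.ofReal ((P-1)⁻¹)) * (m ^ (1 - P⁻¹) * W) := by ring
    _ = ENNReal.ofReal (P/(P-1)) * (m ^ (1 - P⁻¹) * W) := by
        congr 1
        have h1 : P - 1 ≠ 0 := by linarith
        rw [← ENNReal.ofReal_one, ← ENNReal.ofReal_add one_pos.le
          (inv_nonneg.2 (by linarith : (0:ℝ) ≤ P - 1))]
        congr 1
        field_simp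
        ring

lemma block_bound {p r : ℝ≥0∞} (hp1 : 1 < p) (hp : p ≠ ∞) (hr : 1 ≤ r)
    {g : X → ℝ} (hg : Measurable g) (hg0 : ∀ x, 0 ≤ g x) {F : Set X} (hF : MeasurableSet F)
    (hFfin : μ F < ∞) :
    ∫⁻ x in F, ENNReal.ofReal (g x) ∂μ
      ≤ (ENNReal.ofReal (p.toReal / (p.toReal - 1)) * (2:ℝ≥0∞) ^ (p.toReal⁻¹ + r.toReal⁻¹))
          * (μ F ^ (1 - p.toReal⁻¹) * lorentzNormStar μ p r g) := by
  have hP : (1:ℝ) < p.toReal := by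
    rw [← ENNReal.toReal_one]
    exact (ENNReal.toReal_lt_toReal ENNReal.one_ne_top hp).2 hp1
  set W := lorentzNormStar μ p ∞ g with hWdef
  have hWN : W ≤ (2:ℝ≥0∞) ^ (p.toReal⁻¹ + r.toReal⁻¹) * lorentzNormStar μ p r g := by
    rw [hWdef, lorentzNormStar, lorentzNormOf, if_pos rfl]
    exact iSup_le fun s => weak_le_lorentzNormStar hp hr g s.2
  have hlc : ∫⁻ x in F, ENNReal.ofReal (g x) ∂μ
      = ∫⁻ t in Set.Ioi (0:ℝ), (μ.restrict F) {a | t < g a} :=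
    lintegral_eq_lintegral_meas_lt (μ.restrict F)
      (Filter.Eventually.of_forall hg0) hg.aemeasurable
  have hbound : ∀ t ∈ Set.Ioi (0:ℝ),
      (μ.restrict F) {a | t < g a} ≤ min (μ F) ((W / ENNReal.ofReal t) ^ p.toReal) := by
    intro t ht
    refine le_min ?_ ?_
    · rw [Measure.restrict_apply' hF]
      exact measure_mono Set.inter_subset_right
    · refine le_trans (Measure.restrict_le_self _) ?_
      have hset : {a | t < g a} = {x | ENNReal.ofReal t < ENNReal.ofReal |g x|} := by
        ext x
        rw [Set.mem_setOf_eq, Set.mem_setOf_eq, abs_of_nonneg (hg0 x),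
          ENNReal.ofReal_lt_ofReal_iff_of_nonneg (le_of_lt ht)]
      rw [hset]
      exact dist_le_weak hp1 hp g ht
  calc ∫⁻ x in F, ENNReal.ofReal (g x) ∂μ
      = ∫⁻ t in Set.Ioi (0:ℝ), (μ.restrict F) {a | t < g a} := hlc
    _ ≤ ∫⁻ t in Set.Ioi (0:ℝ), min (μ F) ((W / ENNReal.ofReal t) ^ p.toReal) :=
        setLIntegral_mono_nomeas measurableSet_Ioi hbound
    _ ≤ ENNReal.ofReal (p.toReal/(p.toReal-1)) * (μ F ^ (1 - p.toReal⁻¹) * W) :=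
        min_integral_bound hP hFfin.ne
    _ ≤ ENNReal.ofReal (p.toReal/(p.toReal-1)) * (μ F ^ (1 - p.toReal⁻¹)
          * ((2:ℝ≥0∞) ^ (p.toReal⁻¹ + r.toReal⁻¹) * lorentzNormStar μ p r g)) :=
        mul_le_mul_right (mul_le_mul_right hWN _) _
    _ = _ := by ring

end Aux3

noncomputable section Aux4
open MeasureTheory ENNReal Set

variable {X : Type*} [NormedAddCommGroup X] [MeasurableSpace X] [OpensMeasurableSpace X]

lemma annulus_subset_lt {Ω : Set X} {u : ℤ} : annulus Ω u ⊆ {x | ‖x‖ < (2:ℝ)^u} := by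
  intro x hx
  rw [annulus] at hx
  split_ifs at hx with h
  · rw [Set.mem_setOf_eq, h]
    have : ((2:ℝ)^(-1:ℤ)) = 1/2 := by norm_num
    rw [this]
    exact hx.2
  · exact hx.2.2

lemma annulus_disjoint_aux {Ω : Set X} {u v : ℤ} (hu : -1 ≤ u) (hv : u < v) :
    Disjoint (annulus Ω u) (annulus Ω v) := by
  rw [Set.disjoint_left]
  intro x hxu hxv
  have h1 : ‖x‖ < (2:ℝ)^u := annulus_subset_lt hxu
  have hvne : v ≠ -1 := by omega
  rw [annulus, if_neg hvne] at hxv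
  have h2 : (2:ℝ)^(v-1) ≤ ‖x‖ := hxv.2.1
  have h3 : (2:ℝ)^u ≤ (2:ℝ)^(v-1) := zpow_le_zpow_right₀ one_le_two (by omega)
  linarith

lemma annulus_disjoint {Ω : Set X} :
    Pairwise (Function.onFun Disjoint fun u : {u : ℤ // -1 ≤ u} => annulus Ω u.1) := by
  intro u v huv
  have hne : u.1 ≠ v.1 := fun h => huv (Subtype.ext h)
  rcases lt_or_gt_of_ne hne with h | h
  · exact annulus_disjoint_aux u.2 h
  · exact (annulus_disjoint_aux v.2 h).symm

lemma annulus_cover {Ω : Set X} : Ω ⊆ ⋃ u : {u : ℤ // -1 ≤ u}, annulus Ω u.1 := by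
  intro x hx
  by_cases hs : ‖x‖ < 1/2
  · refine Set.mem_iUnion.2 ⟨⟨-1, le_refl _⟩, ?_⟩
    rw [annulus, if_pos rfl]
    exact ⟨hx, hs⟩
  · push_neg at hs
    have hpos : (0:ℝ) < ‖x‖ := lt_of_lt_of_le (by norm_num) hs
    obtain ⟨n, hn⟩ := exists_mem_Ico_zpow hpos one_lt_two
    have hup : ‖x‖ < (2:ℝ)^(n+1) := hn.2
    have hkey : ∀ k : ℤ, k ≤ -1 → (2:ℝ)^(n+1) ≤ (2:ℝ)^k → False := by
      intro k hk hle
      have h2 : (2:ℝ)^k ≤ (2:ℝ)^(-1:ℤ) := zpow_le_zpow_right₀ one_le_two hk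
      have h3 : ((2:ℝ)^(-1:ℤ)) = 2⁻¹ := by
        rw [zpow_neg, zpow_one]
      rw [h3] at h2
      have : ‖x‖ < 2⁻¹ := lt_of_lt_of_le hup (hle.trans h2)
      linarith
    have hn1 : (-1:ℤ) ≤ n + 1 := by
      by_contra hc
      push_neg at hc
      exact hkey (n+1) (by omega) le_rfl
    have hne : n + 1 ≠ -1 := by
      intro hc
      exact hkey (n+1) (by omega) le_rfl
    refine Set.mem_iUnion.2 ⟨⟨n+1, hn1⟩, ?_⟩
    rw [annulus, if_neg hne]
    refine ⟨hx, ?_, hup⟩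
    rw [add_sub_cancel_right]
    exact hn.1

lemma annulus_measurableSet {Ω : Set X} (hΩ : MeasurableSet Ω) (u : ℤ) :
    MeasurableSet (annulus Ω u) := by
  rw [annulus]
  split_ifs
  · have h1 : {x ∈ Ω | ‖x‖ < 1/2} = Ω ∩ {x | ‖x‖ < 1/2} := rfl
    rw [h1]
    exact hΩ.inter (measurableSet_lt measurable_norm measurable_const)
  · have h1 : {x ∈ Ω | (2:ℝ)^(u-1) ≤ ‖x‖ ∧ ‖x‖ < (2:ℝ)^u}
        = Ω ∩ ({x | (2:ℝ)^(u-1) ≤ ‖x‖} ∩ {x | ‖x‖ < (2:ℝ)^u}) := by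
      ext x
      simp only [Set.mem_sep_iff, Set.mem_inter_iff, Set.mem_setOf_eq]
    rw [h1]
    exact hΩ.inter ((measurableSet_le measurable_const measurable_norm).inter
      (measurableSet_lt measurable_norm measurable_const))

set_option maxHeartbeats 1000000 in
lemma setLIntegral_annuli {μ : Measure X} {Ω E : Set X} (hΩ : MeasurableSet Ω)
    (hE : MeasurableSet E) (hEΩ : E ⊆ Ω) (h : X → ℝ≥0∞) :
    ∫⁻ x in E, h x ∂μ = ∑' u : {u : ℤ // -1 ≤ u}, ∫⁻ x in annulus Ω u.1 ∩ E, h x ∂μ := by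
  have hEq : E = ⋃ u : {u : ℤ // -1 ≤ u}, (annulus Ω u.1 ∩ E) := by
    apply Set.Subset.antisymm
    · intro x hx
      obtain ⟨u, hu⟩ := Set.mem_iUnion.1 (annulus_cover (hEΩ hx))
      exact Set.mem_iUnion.2 ⟨u, hu, hx⟩
    · exact Set.iUnion_subset fun u => Set.inter_subset_right
  have := lintegral_iUnion (μ := μ) (s := fun u : {u : ℤ // -1 ≤ u} => annulus Ω u.1 ∩ E)
    (fun u => (annulus_measurableSet hΩ u.1).inter hE)
    (fun i j hij => Disjoint.mono Set.inter_subset_left Set.inter_subset_left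
      (annulus_disjoint hij)) h
  rw [← hEq] at this
  exact this

end Aux4

noncomputable section Aux5
open MeasureTheory ENNReal Set

variable {X : Type*} [MeasurableSpace X] {μ : Measure X}

lemma ofReal_rpow_mul_inv {t : ℝ} (ht : 0 < t) (e : ℝ) :
    ENNReal.ofReal (t ^ e) * (ENNReal.ofReal t)⁻¹ = ENNReal.ofReal (t ^ (e - 1)) := by
  rw [← ENNReal.ofReal_inv_of_pos ht, ← ENNReal.ofReal_mul (Real.rpow_nonneg ht.le _),
    show t ^ e * t⁻¹ = t ^ (e-1) from by
      rw [Real.rpow_sub ht, Real.rpow_one, div_eq_mul_inv]]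

lemma rearr_indicator_le_one {F : Set X} {t : ℝ} :
    rearr μ (F.indicator fun _ => (1:ℝ)) t ≤ 1 := by
  apply rearr_le
  have hempty : {x | (1:ℝ≥0∞) < ENNReal.ofReal |F.indicator (fun _ => (1:ℝ)) x|} = ∅ := by
    ext x
    simp only [Set.mem_setOf_eq, Set.mem_empty_iff_false, iff_false, not_lt]
    by_cases hx : x ∈ F
    · simp [Set.indicator_of_mem hx]
    · simp [Set.indicator_of_notMem hx]
  rw [hempty]
  simp

lemma rearr_indicator_eq_zero {F : Set X} {t : ℝ} (h : μ F ≤ ENNReal.ofReal t) :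
    rearr μ (F.indicator fun _ => (1:ℝ)) t = 0 := by
  apply le_antisymm _ (zero_le)
  apply rearr_le
  refine le_trans (measure_mono ?_) h
  intro x hx
  rw [Set.mem_setOf_eq] at hx
  by_contra hxF
  rw [Set.indicator_of_notMem hxF] at hx
  simp at hx

lemma lintegral_rearr_indicator_le {F : Set X} {s : ℝ} (hs : 0 < s) :
    ∫⁻ t in Set.Ioc (0:ℝ) s, rearr μ (F.indicator fun _ => (1:ℝ)) t
      ≤ min (ENNReal.ofReal s) (μ F) := by
  refine le_min ?_ ?_
  · calc ∫⁻ t in Set.Ioc (0:ℝ) s, rearr μ (F.indicator fun _ => (1:ℝ)) t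
        ≤ ∫⁻ _ in Set.Ioc (0:ℝ) s, (1:ℝ≥0∞) :=
          setLIntegral_mono_nomeas measurableSet_Ioc (fun t _ => rearr_indicator_le_one)
      _ = ENNReal.ofReal s := by
          rw [setLIntegral_const, one_mul, Real.volume_Ioc, sub_zero]
  · by_cases hF : μ F = ∞
    · rw [hF]; exact le_top
    · have hb : ∀ t ∈ Set.Ioc (0:ℝ) s, rearr μ (F.indicator fun _ => (1:ℝ)) t
          ≤ (Set.Ioo (0:ℝ) (μ F).toReal).indicator (fun _ => (1:ℝ≥0∞)) t := by
        intro t ht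
        by_cases hlt : ENNReal.ofReal t < μ F
        · have htm : t ∈ Set.Ioo (0:ℝ) (μ F).toReal :=
            ⟨ht.1, (ENNReal.ofReal_lt_iff_lt_toReal ht.1.le hF).1 hlt⟩
          rw [Set.indicator_of_mem htm]
          exact rearr_indicator_le_one
        · push_neg at hlt
          rw [rearr_indicator_eq_zero hlt]
          exact zero_le
      calc ∫⁻ t in Set.Ioc (0:ℝ) s, rearr μ (F.indicator fun _ => (1:ℝ)) t
          ≤ ∫⁻ t in Set.Ioc (0:ℝ) s,
              (Set.Ioo (0:ℝ) (μ F).toReal).indicator (fun _ => (1:ℝ≥0∞)) t :=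
            setLIntegral_mono_nomeas measurableSet_Ioc hb
        _ ≤ ∫⁻ t, (Set.Ioo (0:ℝ) (μ F).toReal).indicator (fun _ => (1:ℝ≥0∞)) t :=
            setLIntegral_le_lintegral _ _
        _ = ∫⁻ _ in Set.Ioo (0:ℝ) (μ F).toReal, (1:ℝ≥0∞) :=
            lintegral_indicator measurableSet_Ioo _
        _ = μ F := by
            rw [setLIntegral_const, one_mul, Real.volume_Ioo, sub_zero,
              ENNReal.ofReal_toReal hF]

lemma rearrStar_indicator_le {F : Set X} {s : ℝ} (hs : 0 < s) :
    rearrStar μ (F.indicator fun _ => (1:ℝ)) s ≤ min 1 (μ F * (ENNReal.ofReal s)⁻¹) := by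
  have h0 : ENNReal.ofReal s ≠ 0 := (ENNReal.ofReal_pos.2 hs).ne'
  refine le_min ?_ ?_
  · calc rearrStar μ (F.indicator fun _ => (1:ℝ)) s
        ≤ (ENNReal.ofReal s)⁻¹ * ENNReal.ofReal s :=
          mul_le_mul_right ((lintegral_rearr_indicator_le hs).trans (min_le_left _ _)) _
      _ = 1 := ENNReal.inv_mul_cancel h0 ENNReal.ofReal_ne_top
  · calc rearrStar μ (F.indicator fun _ => (1:ℝ)) s
        ≤ (ENNReal.ofReal s)⁻¹ * μ F :=
          mul_le_mul_right ((lintegral_rearr_indicator_le hs).trans (min_le_right _ _)) _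
      _ = μ F * (ENNReal.ofReal s)⁻¹ := mul_comm _ _

lemma lintegral_Ioc_rpow_ofReal {b c : ℝ} (hb : -1 < b) (hc : 0 < c) :
    ∫⁻ t in Set.Ioc (0:ℝ) c, ENNReal.ofReal (t ^ b) = ENNReal.ofReal (c ^ (b+1) / (b+1)) := by
  have hint : IntegrableOn (fun t : ℝ => t ^ b) (Set.Ioc (0:ℝ) c) volume :=
    (intervalIntegrable_iff_integrableOn_Ioc_of_le hc.le).1
      (intervalIntegral.intervalIntegrable_rpow' hb)
  rw [← ofReal_integral_eq_lintegral_ofReal hint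
    ((ae_restrict_iff' measurableSet_Ioc).2 (Filter.Eventually.of_forall
      fun t ht => Real.rpow_nonneg ht.1.le b))]
  congr 1
  rw [← intervalIntegral.integral_of_le hc.le, integral_rpow (Or.inl hb),
    Real.zero_rpow (by linarith : b + 1 ≠ 0), sub_zero]

lemma lorentzNormStar_indicator_le {p r : ℝ≥0∞} (hp1 : 1 < p) (hp : p ≠ ∞) (hr : 1 ≤ r) :
    ∃ C : ℝ≥0∞, C ≠ ∞ ∧ ∀ F : Set X, μ F < ∞ →
      lorentzNormStar μ p r (F.indicator fun _ => (1:ℝ)) ≤ C * μ F ^ p.toReal⁻¹ := by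
  have hP : (1:ℝ) < p.toReal := by
    rw [← ENNReal.toReal_one]
    exact (ENNReal.toReal_lt_toReal ENNReal.one_ne_top hp).2 hp1
  have hP0 : (0:ℝ) < p.toReal := lt_trans one_pos hP
  have hip0 : (0:ℝ) < p.toReal⁻¹ := inv_pos.2 hP0
  have hip1 : p.toReal⁻¹ < 1 := by
    rw [inv_lt_one_iff₀]; right; exact hP
  set ip := p.toReal⁻¹ with hipdef
  by_cases hrtop : r = ∞
  · refine ⟨1, one_ne_top, fun F hFfin => ?_⟩
    rw [one_mul, lorentzNormStar, lorentzNormOf, if_pos hrtop]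
    refine iSup_le fun t => ?_
    by_cases hM0 : μ F = 0
    · calc ENNReal.ofReal (t.1 ^ ip) * rearrStar μ (F.indicator fun _ => (1:ℝ)) t.1
          ≤ ENNReal.ofReal (t.1 ^ ip) * (μ F * (ENNReal.ofReal t.1)⁻¹) :=
            mul_le_mul_right ((rearrStar_indicator_le t.2).trans (min_le_right _ _)) _
        _ = 0 := by rw [hM0, zero_mul, mul_zero]
        _ ≤ _ := zero_le
    · have hmt : 0 < (μ F).toReal := ENNReal.toReal_pos hM0 hFfin.ne
      rcases le_or_gt t.1 (μ F).toReal with hle | hlt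
      · calc ENNReal.ofReal (t.1 ^ ip) * rearrStar μ (F.indicator fun _ => (1:ℝ)) t.1
            ≤ ENNReal.ofReal (t.1 ^ ip) * 1 :=
              mul_le_mul_right ((rearrStar_indicator_le t.2).trans (min_le_left _ _)) _
          _ ≤ ENNReal.ofReal ((μ F).toReal ^ ip) * 1 := by
              exact mul_le_mul_left (ENNReal.ofReal_le_ofReal
                (Real.rpow_le_rpow t.2.le hle hip0.le)) _
          _ = μ F ^ ip := by
              rw [mul_one, ← ENNReal.ofReal_rpow_of_pos hmt, ENNReal.ofReal_toReal hFfin.ne]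
      · have htpos : (0:ℝ) < t.1 := t.2
        calc ENNReal.ofReal (t.1 ^ ip) * rearrStar μ (F.indicator fun _ => (1:ℝ)) t.1
            ≤ ENNReal.ofReal (t.1 ^ ip) * (μ F * (ENNReal.ofReal t.1)⁻¹) :=
              mul_le_mul_right ((rearrStar_indicator_le t.2).trans (min_le_right _ _)) _
          _ = μ F * ENNReal.ofReal (t.1 ^ (ip - 1)) := by
              rw [mul_comm (ENNReal.ofReal (t.1 ^ ip)), mul_assoc]
              congr 1
              rw [mul_comm, ofReal_rpow_mul_inv htpos]
          _ ≤ μ F * ENNReal.ofReal ((μ F).toReal ^ (ip - 1)) :=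
              mul_le_mul_right (ENNReal.ofReal_le_ofReal
                (Real.rpow_le_rpow_of_nonpos hmt hlt.le (by linarith))) _
          _ = μ F ^ ip := by
              rw [← ENNReal.ofReal_rpow_of_pos hmt, ENNReal.ofReal_toReal hFfin.ne]
              nth_rewrite 1 [← ENNReal.rpow_one (μ F)]
              rw [← ENNReal.rpow_add _ _ hM0 hFfin.ne]
              congr 1
              ring
  · -- r finite
    have hrt1 : (1:ℝ) ≤ r.toReal := by
      rw [← ENNReal.toReal_one]
      exact (ENNReal.toReal_le_toReal ENNReal.one_ne_top hrtop).2 hr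
    have hrt0 : (0:ℝ) < r.toReal := lt_of_lt_of_le one_pos hrt1
    set rt := r.toReal with hrtdef
    have hb1 : (-1:ℝ) < ip * rt - 1 := by nlinarith
    have hb2 : (ip - 1) * rt - 1 < -1 := by nlinarith
    refine ⟨(ENNReal.ofReal ((ip * rt)⁻¹ + ((1 - ip) * rt)⁻¹)) ^ rt⁻¹,
      (ENNReal.rpow_lt_top_of_nonneg (inv_nonneg.2 hrt0.le) ENNReal.ofReal_ne_top).ne,
      fun F hFfin => ?_⟩
    rw [lorentzNormStar, lorentzNormOf, if_neg hrtop]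
    by_cases hM0 : μ F = 0
    · have hz : ∀ t ∈ Set.Ioi (0:ℝ),
          (ENNReal.ofReal (t ^ ip) * rearrStar μ (F.indicator fun _ => (1:ℝ)) t) ^ rt
            / ENNReal.ofReal t = 0 := by
        intro t ht
        have : rearrStar μ (F.indicator fun _ => (1:ℝ)) t = 0 := by
          refine le_antisymm ?_ (zero_le)
          refine (rearrStar_indicator_le ht).trans ?_
          rw [hM0, zero_mul]
          exact min_le_right _ _
        rw [this, mul_zero, ENNReal.zero_rpow_of_pos hrt0, ENNReal.zero_div]
      calc (∫⁻ t in Set.Ioi (0:ℝ),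
            (ENNReal.ofReal (t ^ ip) * rearrStar μ (F.indicator fun _ => (1:ℝ)) t) ^ rt
              / ENNReal.ofReal t) ^ rt⁻¹
          = (∫⁻ _ in Set.Ioi (0:ℝ), (0:ℝ≥0∞)) ^ rt⁻¹ := by
            rw [setLIntegral_congr_fun measurableSet_Ioi
              hz]
        _ = 0 := by
            rw [lintegral_zero, ENNReal.zero_rpow_of_pos (inv_pos.2 hrt0)]
        _ ≤ _ := zero_le
    · have hmt : 0 < (μ F).toReal := ENNReal.toReal_pos hM0 hFfin.ne
      set mt := (μ F).toReal with hmtdef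
      have hM : μ F = ENNReal.ofReal mt := (ENNReal.ofReal_toReal hFfin.ne).symm
      have hMne : μ F ≠ ∞ := hFfin.ne
      -- pointwise bounds
      have hptw1 : ∀ t ∈ Set.Ioc (0:ℝ) mt,
          (ENNReal.ofReal (t ^ ip) * rearrStar μ (F.indicator fun _ => (1:ℝ)) t) ^ rt
            / ENNReal.ofReal t ≤ ENNReal.ofReal (t ^ (ip * rt - 1)) := by
        intro t ht
        calc (ENNReal.ofReal (t ^ ip) * rearrStar μ (F.indicator fun _ => (1:ℝ)) t) ^ rt
              / ENNReal.ofReal t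
            ≤ (ENNReal.ofReal (t ^ ip) * 1) ^ rt / ENNReal.ofReal t :=
              ENNReal.div_le_div (ENNReal.rpow_le_rpow (mul_le_mul_right
                ((rearrStar_indicator_le ht.1).trans (min_le_left _ _)) _) hrt0.le) le_rfl
          _ = ENNReal.ofReal (t ^ (ip * rt - 1)) := by
              rw [mul_one, ENNReal.ofReal_rpow_of_pos (Real.rpow_pos_of_pos ht.1 ip),
                ← Real.rpow_mul ht.1.le, div_eq_mul_inv, ofReal_rpow_mul_inv ht.1]
      have hptw2 : ∀ t ∈ Set.Ioi mt,
          (ENNReal.ofReal (t ^ ip) * rearrStar μ (F.indicator fun _ => (1:ℝ)) t) ^ rt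
            / ENNReal.ofReal t
            ≤ μ F ^ rt * ENNReal.ofReal (t ^ ((ip - 1) * rt - 1)) := by
        intro t ht
        have htpos : 0 < t := hmt.trans ht
        calc (ENNReal.ofReal (t ^ ip) * rearrStar μ (F.indicator fun _ => (1:ℝ)) t) ^ rt
              / ENNReal.ofReal t
            ≤ (ENNReal.ofReal (t ^ ip) * (μ F * (ENNReal.ofReal t)⁻¹)) ^ rt
                / ENNReal.ofReal t :=
              ENNReal.div_le_div (ENNReal.rpow_le_rpow (mul_le_mul_right
                ((rearrStar_indicator_le htpos).trans (min_le_right _ _)) _) hrt0.le) le_rfl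
          _ = (μ F * ENNReal.ofReal (t ^ (ip - 1))) ^ rt / ENNReal.ofReal t := by
              congr 2
              rw [mul_comm (ENNReal.ofReal (t ^ ip)), mul_assoc]
              congr 1
              rw [mul_comm, ofReal_rpow_mul_inv htpos]
          _ = μ F ^ rt * ENNReal.ofReal (t ^ ((ip - 1) * rt - 1)) := by
              rw [ENNReal.mul_rpow_of_nonneg _ _ hrt0.le,
                ENNReal.ofReal_rpow_of_pos (Real.rpow_pos_of_pos htpos _),
                ← Real.rpow_mul htpos.le, div_eq_mul_inv, mul_assoc,
                ofReal_rpow_mul_inv htpos]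
      have hsplitset : Set.Ioi (0:ℝ) = Set.Ioc 0 mt ∪ Set.Ioi mt :=
        (Set.Ioc_union_Ioi_eq_Ioi hmt.le).symm
      have hiprt : (0:ℝ) < ip * rt := mul_pos hip0 hrt0
      have h1iprt : (0:ℝ) < (1 - ip) * rt := mul_pos (by linarith) hrt0
      have hJ1 : ∫⁻ t in Set.Ioc (0:ℝ) mt,
          (ENNReal.ofReal (t ^ ip) * rearrStar μ (F.indicator fun _ => (1:ℝ)) t) ^ rt
            / ENNReal.ofReal t ≤ μ F ^ (ip * rt) * ENNReal.ofReal ((ip * rt)⁻¹) := by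
        calc ∫⁻ t in Set.Ioc (0:ℝ) mt,
            (ENNReal.ofReal (t ^ ip) * rearrStar μ (F.indicator fun _ => (1:ℝ)) t) ^ rt
              / ENNReal.ofReal t
            ≤ ∫⁻ t in Set.Ioc (0:ℝ) mt, ENNReal.ofReal (t ^ (ip * rt - 1)) :=
              setLIntegral_mono_nomeas measurableSet_Ioc hptw1
          _ = ENNReal.ofReal (mt ^ (ip * rt) / (ip * rt)) := by
              rw [lintegral_Ioc_rpow_ofReal hb1 hmt, sub_add_cancel]
          _ = μ F ^ (ip * rt) * ENNReal.ofReal ((ip * rt)⁻¹) := by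
              rw [div_eq_mul_inv, ENNReal.ofReal_mul (Real.rpow_nonneg hmt.le _),
                ← ENNReal.ofReal_rpow_of_pos hmt, ← hM]
      have hJ2 : ∫⁻ t in Set.Ioi mt,
          (ENNReal.ofReal (t ^ ip) * rearrStar μ (F.indicator fun _ => (1:ℝ)) t) ^ rt
            / ENNReal.ofReal t ≤ μ F ^ (ip * rt) * ENNReal.ofReal (((1 - ip) * rt)⁻¹) := by
        calc ∫⁻ t in Set.Ioi mt,
            (ENNReal.ofReal (t ^ ip) * rearrStar μ (F.indicator fun _ => (1:ℝ)) t) ^ rt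
              / ENNReal.ofReal t
            ≤ ∫⁻ t in Set.Ioi mt, μ F ^ rt * ENNReal.ofReal (t ^ ((ip - 1) * rt - 1)) :=
              setLIntegral_mono_nomeas measurableSet_Ioi hptw2
          _ = μ F ^ rt * ∫⁻ t in Set.Ioi mt, ENNReal.ofReal (t ^ ((ip - 1) * rt - 1)) :=
              lintegral_const_mul' _ _ (ENNReal.rpow_lt_top_of_nonneg hrt0.le hMne).ne
          _ = μ F ^ rt * ENNReal.ofReal (mt ^ ((ip - 1) * rt) / ((1 - ip) * rt)) := by
              rw [lintegral_Ioi_rpow_ofReal hb2 hmt, sub_add_cancel,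
                show -((ip - 1) * rt - 1) - 1 = (1 - ip) * rt by ring]
          _ = μ F ^ (ip * rt) * ENNReal.ofReal (((1 - ip) * rt)⁻¹) := by
              rw [div_eq_mul_inv, ENNReal.ofReal_mul (Real.rpow_nonneg hmt.le _),
                ← ENNReal.ofReal_rpow_of_pos hmt, ← hM, ← mul_assoc,
                ← ENNReal.rpow_add _ _ hM0 hMne,
                show rt + (ip - 1) * rt = ip * rt by ring]
      calc (∫⁻ t in Set.Ioi (0:ℝ),
            (ENNReal.ofReal (t ^ ip) * rearrStar μ (F.indicator fun _ => (1:ℝ)) t) ^ rt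
              / ENNReal.ofReal t) ^ rt⁻¹
          = ((∫⁻ t in Set.Ioc (0:ℝ) mt,
              (ENNReal.ofReal (t ^ ip) * rearrStar μ (F.indicator fun _ => (1:ℝ)) t) ^ rt
                / ENNReal.ofReal t)
             + ∫⁻ t in Set.Ioi mt,
              (ENNReal.ofReal (t ^ ip) * rearrStar μ (F.indicator fun _ => (1:ℝ)) t) ^ rt
                / ENNReal.ofReal t) ^ rt⁻¹ := by
            rw [hsplitset, lintegral_union measurableSet_Ioi (Set.Ioc_disjoint_Ioi le_rfl)]
        _ ≤ (μ F ^ (ip * rt)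
              * ENNReal.ofReal ((ip * rt)⁻¹ + ((1 - ip) * rt)⁻¹)) ^ rt⁻¹ := by
            refine ENNReal.rpow_le_rpow ?_ (inv_nonneg.2 hrt0.le)
            rw [ENNReal.ofReal_add (inv_nonneg.2 hiprt.le) (inv_nonneg.2 h1iprt.le), mul_add]
            exact add_le_add hJ1 hJ2
        _ = ENNReal.ofReal ((ip * rt)⁻¹ + ((1 - ip) * rt)⁻¹) ^ rt⁻¹ * μ F ^ ip := by
            rw [ENNReal.mul_rpow_of_nonneg _ _ (inv_nonneg.2 hrt0.le), ← ENNReal.rpow_mul,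
              mul_comm (μ F ^ (ip * rt * rt⁻¹)), mul_assoc ip rt rt⁻¹,
              mul_inv_cancel₀ hrt0.ne', mul_one]

end Aux5

noncomputable section Aux6
open MeasureTheory ENNReal Set

lemma part2_core {X : Type*} [NormedAddCommGroup X] [MeasurableSpace X] [OpensMeasurableSpace X]
    {μ : Measure X} {Ω E : Set X} (hΩ : MeasurableSet Ω) (hE : MeasurableSet E) (hEΩ : E ⊆ Ω)
    (hEfin : μ E < ∞) {p r : ℝ≥0∞} (hp1 : 1 < p) (hp : p ≠ ∞) (hr : 1 ≤ r) (a : ℝ)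
    {f : X → ℝ} (hf : Measurable f) (hf0 : ∀ x, 0 ≤ f x) :
    ∫⁻ x in E, ENNReal.ofReal (f x) ∂μ
      ≤ (ENNReal.ofReal (p.toReal / (p.toReal - 1)) * (2:ℝ≥0∞) ^ (p.toReal⁻¹ + r.toReal⁻¹))
        * ∑' u : {u : ℤ // -1 ≤ u},
            (ENNReal.ofReal ((2:ℝ) ^ ((u.1:ℝ) * (-a)))
              * μ (annulus Ω u.1 ∩ E) ^ (1 - p.toReal⁻¹))
            * (ENNReal.ofReal ((2:ℝ) ^ ((u.1:ℝ) * a))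
               * lorentzNormStar μ p r ((annulus Ω u.1).indicator f)) := by
  rw [setLIntegral_annuli hΩ hE hEΩ, ← ENNReal.tsum_mul_left]
  refine ENNReal.tsum_le_tsum fun u => ?_
  have hAm : MeasurableSet (annulus Ω u.1 ∩ E) := (annulus_measurableSet hΩ u.1).inter hE
  have hAfin : μ (annulus Ω u.1 ∩ E) < ∞ :=
    lt_of_le_of_lt (measure_mono Set.inter_subset_right) hEfin
  have hgm : Measurable ((annulus Ω u.1).indicator f) :=
    hf.indicator (annulus_measurableSet hΩ u.1)
  have hg0 : ∀ x, 0 ≤ (annulus Ω u.1).indicator f x :=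
    fun x => Set.indicator_nonneg (fun y _ => hf0 y) x
  have heq : ∫⁻ x in annulus Ω u.1 ∩ E, ENNReal.ofReal (f x) ∂μ
      = ∫⁻ x in annulus Ω u.1 ∩ E, ENNReal.ofReal ((annulus Ω u.1).indicator f x) ∂μ :=
    setLIntegral_congr_fun hAm (fun x hx => by
      rw [Set.indicator_of_mem hx.1])
  rw [heq]
  refine le_trans (block_bound hp1 hp hr hgm hg0 hAm hAfin) ?_
  refine mul_le_mul_right (le_of_eq ?_) _
  have hone : ENNReal.ofReal ((2:ℝ) ^ ((u.1:ℝ) * (-a)))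
      * ENNReal.ofReal ((2:ℝ) ^ ((u.1:ℝ) * a)) = 1 := by
    rw [← ENNReal.ofReal_mul (Real.rpow_nonneg (by norm_num) _), ← Real.rpow_add two_pos,
      show (u.1:ℝ) * (-a) + (u.1:ℝ) * a = 0 by ring, Real.rpow_zero, ENNReal.ofReal_one]
  calc μ (annulus Ω u.1 ∩ E) ^ (1 - p.toReal⁻¹)
        * lorentzNormStar μ p r ((annulus Ω u.1).indicator f)
      = 1 * (μ (annulus Ω u.1 ∩ E) ^ (1 - p.toReal⁻¹)
          * lorentzNormStar μ p r ((annulus Ω u.1).indicator f)) := (one_mul _).symm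
    _ = _ := by rw [← hone]; ring

lemma tsum_mul_le_holder {ι : Type*} [Countable ι] [MeasurableSpace ι]
    [MeasurableSingletonClass ι] {a b : ι → ℝ≥0∞} {s t : ℝ}
    (hst : Real.HolderConjugate s t) :
    ∑' i, a i * b i ≤ (∑' i, a i ^ s) ^ (1/s) * (∑' i, b i ^ t) ^ (1/t) := by
  rw [← lintegral_count, ← lintegral_count (fun i => a i ^ s),
    ← lintegral_count (fun i => b i ^ t)]
  exact ENNReal.lintegral_mul_le_Lp_mul_Lq _ hst
    (measurable_of_countable a).aemeasurable (measurable_of_countable b).aemeasurable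

lemma conjExp_toReal_inv {p : ℝ≥0∞} (hp1 : 1 < p) (hp : p ≠ ∞) :
    (conjExp p).toReal⁻¹ = 1 - p.toReal⁻¹ := by
  have hP : (1:ℝ) < p.toReal := by
    rw [← ENNReal.toReal_one]
    exact (ENNReal.toReal_lt_toReal ENNReal.one_ne_top hp).2 hp1
  have hP0 : (0:ℝ) < p.toReal := lt_trans one_pos hP
  rw [conjExp, if_neg hp1.ne', if_neg hp,
    ENNReal.toReal_ofReal (div_nonneg hP0.le (by linarith)), inv_div, sub_div,
    div_self hP0.ne', one_div]

end Aux6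


open MeasureTheory ENNReal Set in
/-- Let `a ∈ ℝ`, `1 < p < ∞`, `1 ≤ q, r ≤ ∞`, and let `p'`, `q'`
be the conjugate exponents of `p`, `q`.  Let `E ⊆ Ω` be measurable with
`μ(E) < ∞`.  Then:
(1) if `Σ_{u≥-1} 2^{uaq} μ(A_u ∩ E)^{q/p} < ∞` (sup-modification for `q = ∞`),
then `‖χ_E‖*_{HL^{a,r}_{p,q}} < ∞`;
(2) if `Σ_{u≥-1} 2^{-uaq'} μ(A_u ∩ E)^{q'/p'} < ∞` (sup-modification for `q' = ∞`),
then there is a finite constant `C_E` with `∫_E f dμ ≤ C_E ‖f‖*_{HL^{a,r}_{p,q}}`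
for every nonnegative measurable `f` on `Ω`. -/
theorem lorentzHerz_BFS_sufficient {N : ℕ} (hN : 1 ≤ N)
    (Ω : Set (Euc N)) (hΩ : MeasurableSet Ω)
    (a : ℝ) (p q r : ℝ≥0∞) (hp1 : 1 < p) (hp : p ≠ ∞) (hq : 1 ≤ q) (hr : 1 ≤ r)
    (E : Set (Euc N)) (hE : MeasurableSet E) (hEΩ : E ⊆ Ω) (hEfin : volume E < ∞) :
    (herzSetNorm volume Ω a p q E < ∞ →
      herzNormStar volume Ω a p q r (E.indicator fun _ => (1 : ℝ)) < ∞)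
    ∧ (herzSetNorm volume Ω (-a) (conjExp p) (conjExp q) E < ∞ →
      ∃ C : ℝ≥0∞, C < ∞ ∧ ∀ f : Euc N → ℝ, Measurable f → (∀ x, 0 ≤ f x) →
        ∫⁻ x in E, ENNReal.ofReal (f x) ∂volume
          ≤ C * herzNormStar volume Ω a p q r f) := by
  constructor
  · -- Part (1)
    intro hS
    obtain ⟨C, hCne, hC⟩ :=
      lorentzNormStar_indicator_le (μ := (volume : Measure (Euc N))) hp1 hp hr
    have hblock : ∀ u : ℤ, (annulus Ω u).indicator (E.indicator fun _ => (1:ℝ))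
        = ((annulus Ω u ∩ E).indicator fun _ => (1:ℝ)) := by
      intro u
      funext x
      by_cases h1 : x ∈ annulus Ω u <;> by_cases h2 : x ∈ E <;>
        simp [Set.indicator_apply, h1, h2]
    have hterm : ∀ u : {u : ℤ // -1 ≤ u},
        ENNReal.ofReal ((2:ℝ) ^ ((u.1:ℝ) * a)) * lorentzNormStar volume p r
            ((annulus Ω u.1).indicator (E.indicator fun _ => (1:ℝ)))
          ≤ C * (ENNReal.ofReal ((2:ℝ) ^ ((u.1:ℝ) * a))
              * volume (annulus Ω u.1 ∩ E) ^ p.toReal⁻¹) := by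
      intro u
      rw [hblock u.1]
      calc ENNReal.ofReal ((2:ℝ) ^ ((u.1:ℝ) * a)) * lorentzNormStar volume p r
            ((annulus Ω u.1 ∩ E).indicator fun _ => (1:ℝ))
          ≤ ENNReal.ofReal ((2:ℝ) ^ ((u.1:ℝ) * a))
              * (C * volume (annulus Ω u.1 ∩ E) ^ p.toReal⁻¹) :=
            mul_le_mul_right (hC _ (lt_of_le_of_lt
              (measure_mono Set.inter_subset_right) hEfin)) _
        _ = _ := by ring
    rw [herzNormStar, herzNormWith]
    by_cases hqtop : q = ∞
    · rw [if_pos hqtop]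
      rw [herzSetNorm, if_pos hqtop] at hS
      refine lt_of_le_of_lt ?_ (ENNReal.mul_lt_top hCne.lt_top hS)
      exact iSup_le fun u => (hterm u).trans (mul_le_mul_right
        (le_iSup (fun v : {v : ℤ // -1 ≤ v} => ENNReal.ofReal ((2:ℝ) ^ ((v.1:ℝ) * a))
          * volume (annulus Ω v.1 ∩ E) ^ p.toReal⁻¹) u) _)
    · rw [if_neg hqtop]
      rw [herzSetNorm, if_neg hqtop] at hS
      have hqt0 : (0:ℝ) < q.toReal := by
        have : (1:ℝ) ≤ q.toReal := by
          rw [← ENNReal.toReal_one]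
          exact (ENNReal.toReal_le_toReal ENNReal.one_ne_top hqtop).2 hq
        linarith
      refine ENNReal.rpow_lt_top_of_nonneg (inv_nonneg.2 hqt0.le) ?_
      have hle : ∑' u : {u : ℤ // -1 ≤ u},
          (ENNReal.ofReal ((2:ℝ) ^ ((u.1:ℝ) * a)) * lorentzNormStar volume p r
            ((annulus Ω u.1).indicator (E.indicator fun _ => (1:ℝ)))) ^ q.toReal
          ≤ C ^ q.toReal * ∑' u : {u : ℤ // -1 ≤ u},
            (ENNReal.ofReal ((2:ℝ) ^ ((u.1:ℝ) * a))
              * volume (annulus Ω u.1 ∩ E) ^ p.toReal⁻¹) ^ q.toReal := by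
        rw [← ENNReal.tsum_mul_left]
        refine ENNReal.tsum_le_tsum fun u => ?_
        rw [← ENNReal.mul_rpow_of_nonneg _ _ hqt0.le]
        exact ENNReal.rpow_le_rpow (hterm u) hqt0.le
      exact (lt_of_le_of_lt hle (ENNReal.mul_lt_top
        (ENNReal.rpow_lt_top_of_nonneg hqt0.le hCne) hS)).ne
  · -- Part (2)
    intro hS'
    have hip' : (conjExp p).toReal⁻¹ = 1 - p.toReal⁻¹ := conjExp_toReal_inv hp1 hp
    have hipnn : (0:ℝ) ≤ p.toReal⁻¹ := inv_nonneg.2 ENNReal.toReal_nonneg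
    have hirtnn : (0:ℝ) ≤ r.toReal⁻¹ := inv_nonneg.2 ENNReal.toReal_nonneg
    set C0 : ℝ≥0∞ := ENNReal.ofReal (p.toReal / (p.toReal - 1))
      * (2:ℝ≥0∞) ^ (p.toReal⁻¹ + r.toReal⁻¹) with hC0def
    have hC0ne : C0 ≠ ∞ :=
      ENNReal.mul_ne_top ENNReal.ofReal_ne_top (two_rpow_ne_top (add_nonneg hipnn hirtnn))
    by_cases hq1 : q = 1
    · subst hq1
      have hcq : conjExp 1 = ∞ := by rw [conjExp, if_pos rfl]
      rw [herzSetNorm, hcq, if_pos rfl] at hS'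
      simp only [hip'] at hS'
      refine ⟨C0 * (⨆ u : {u : ℤ // -1 ≤ u},
        ENNReal.ofReal ((2:ℝ) ^ ((u.1:ℝ) * -a))
          * volume (annulus Ω u.1 ∩ E) ^ (1 - p.toReal⁻¹)), ?_, ?_⟩
      · exact ENNReal.mul_lt_top hC0ne.lt_top hS'
      · intro f hf hf0
        refine le_trans (part2_core hΩ hE hEΩ hEfin hp1 hp hr a hf hf0) ?_
        have hH : herzNormStar volume Ω a p 1 r f
            = ∑' u : {u : ℤ // -1 ≤ u}, ENNReal.ofReal ((2:ℝ) ^ ((u.1:ℝ) * a))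
                * lorentzNormStar volume p r ((annulus Ω u.1).indicator f) := by
          rw [herzNormStar, herzNormWith, if_neg ENNReal.one_ne_top]
          simp [ENNReal.toReal_one]
        have hkey : ∑' u : {u : ℤ // -1 ≤ u},
              (ENNReal.ofReal ((2:ℝ) ^ ((u.1:ℝ) * -a))
                * volume (annulus Ω u.1 ∩ E) ^ (1 - p.toReal⁻¹))
              * (ENNReal.ofReal ((2:ℝ) ^ ((u.1:ℝ) * a))
                * lorentzNormStar volume p r ((annulus Ω u.1).indicator f))
            ≤ (⨆ v : {v : ℤ // -1 ≤ v}, ENNReal.ofReal ((2:ℝ) ^ ((v.1:ℝ) * -a))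
                * volume (annulus Ω v.1 ∩ E) ^ (1 - p.toReal⁻¹))
              * ∑' u : {u : ℤ // -1 ≤ u}, ENNReal.ofReal ((2:ℝ) ^ ((u.1:ℝ) * a))
                * lorentzNormStar volume p r ((annulus Ω u.1).indicator f) := by
          rw [← ENNReal.tsum_mul_left]
          exact ENNReal.tsum_le_tsum fun u => mul_le_mul_left (le_iSup
            (fun v : {v : ℤ // -1 ≤ v} => ENNReal.ofReal ((2:ℝ) ^ ((v.1:ℝ) * -a))
              * volume (annulus Ω v.1 ∩ E) ^ (1 - p.toReal⁻¹)) u) _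
        refine le_trans (mul_le_mul_right hkey _) (le_of_eq ?_)
        rw [hH, ← mul_assoc]
    by_cases hqtop : q = ∞
    · subst hqtop
      have hcq : conjExp ∞ = 1 := by rw [conjExp, if_neg (by simp), if_pos rfl]
      rw [herzSetNorm, hcq, if_neg ENNReal.one_ne_top] at hS'
      simp only [hip', ENNReal.toReal_one, ENNReal.rpow_one] at hS'
      refine ⟨C0 * (∑' u : {u : ℤ // -1 ≤ u},
        ENNReal.ofReal ((2:ℝ) ^ ((u.1:ℝ) * -a))
          * volume (annulus Ω u.1 ∩ E) ^ (1 - p.toReal⁻¹)), ?_, ?_⟩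
      · exact ENNReal.mul_lt_top hC0ne.lt_top hS'
      · intro f hf hf0
        refine le_trans (part2_core hΩ hE hEΩ hEfin hp1 hp hr a hf hf0) ?_
        have hH : herzNormStar volume Ω a p ∞ r f
            = ⨆ u : {u : ℤ // -1 ≤ u}, ENNReal.ofReal ((2:ℝ) ^ ((u.1:ℝ) * a))
                * lorentzNormStar volume p r ((annulus Ω u.1).indicator f) := by
          rw [herzNormStar, herzNormWith, if_pos rfl]
        have hkey : ∑' u : {u : ℤ // -1 ≤ u},
              (ENNReal.ofReal ((2:ℝ) ^ ((u.1:ℝ) * -a))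
                * volume (annulus Ω u.1 ∩ E) ^ (1 - p.toReal⁻¹))
              * (ENNReal.ofReal ((2:ℝ) ^ ((u.1:ℝ) * a))
                * lorentzNormStar volume p r ((annulus Ω u.1).indicator f))
            ≤ (∑' u : {u : ℤ // -1 ≤ u}, ENNReal.ofReal ((2:ℝ) ^ ((u.1:ℝ) * -a))
                * volume (annulus Ω u.1 ∩ E) ^ (1 - p.toReal⁻¹))
              * ⨆ v : {v : ℤ // -1 ≤ v}, ENNReal.ofReal ((2:ℝ) ^ ((v.1:ℝ) * a))
                * lorentzNormStar volume p r ((annulus Ω v.1).indicator f) := by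
          rw [← ENNReal.tsum_mul_right]
          exact ENNReal.tsum_le_tsum fun u => mul_le_mul_right (le_iSup
            (fun v : {v : ℤ // -1 ≤ v} => ENNReal.ofReal ((2:ℝ) ^ ((v.1:ℝ) * a))
              * lorentzNormStar volume p r ((annulus Ω v.1).indicator f)) u) _
        refine le_trans (mul_le_mul_right hkey _) (le_of_eq ?_)
        rw [hH, ← mul_assoc]
    · -- 1 < q < ∞
      have hqt1 : (1:ℝ) < q.toReal := by
        rw [← ENNReal.toReal_one]
        exact (ENNReal.toReal_lt_toReal ENNReal.one_ne_top hqtop).2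
          (lt_of_le_of_ne hq (Ne.symm hq1))
      have hqt0 : (0:ℝ) < q.toReal := lt_trans one_pos hqt1
      have hcq : conjExp q = ENNReal.ofReal (q.toReal / (q.toReal - 1)) := by
        rw [conjExp, if_neg hq1, if_neg hqtop]
      have hcq_ne : conjExp q ≠ ∞ := by rw [hcq]; exact ENNReal.ofReal_ne_top
      have hcqt : (conjExp q).toReal = q.toReal / (q.toReal - 1) := by
        rw [hcq, ENNReal.toReal_ofReal (div_nonneg hqt0.le (by linarith))]
      have hcqt0 : (0:ℝ) < (conjExp q).toReal := by
        rw [hcqt]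
        exact div_pos hqt0 (by linarith)
      have hst : Real.HolderConjugate ((conjExp q).toReal) (q.toReal) := by
        have h := (Real.HolderConjugate.conjExponent hqt1).symm
        rw [Real.conjExponent] at h
        rw [hcqt]
        exact h
      rw [herzSetNorm, if_neg hcq_ne] at hS'
      simp only [hip'] at hS'
      refine ⟨C0 * (∑' u : {u : ℤ // -1 ≤ u},
        (ENNReal.ofReal ((2:ℝ) ^ ((u.1:ℝ) * -a))
          * volume (annulus Ω u.1 ∩ E) ^ (1 - p.toReal⁻¹)) ^ (conjExp q).toReal)
            ^ (1 / (conjExp q).toReal), ?_, ?_⟩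
      · exact ENNReal.mul_lt_top hC0ne.lt_top
          (ENNReal.rpow_lt_top_of_nonneg (by positivity) hS'.ne)
      · intro f hf hf0
        refine le_trans (part2_core hΩ hE hEΩ hEfin hp1 hp hr a hf hf0) ?_
        have hH : herzNormStar volume Ω a p q r f
            = (∑' u : {u : ℤ // -1 ≤ u},
                (ENNReal.ofReal ((2:ℝ) ^ ((u.1:ℝ) * a))
                  * lorentzNormStar volume p r ((annulus Ω u.1).indicator f)) ^ q.toReal)
                ^ q.toReal⁻¹ := by
          rw [herzNormStar, herzNormWith, if_neg hqtop]
        have hkey := tsum_mul_le_holder (ι := {u : ℤ // -1 ≤ u})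
          (a := fun u => ENNReal.ofReal ((2:ℝ) ^ ((u.1:ℝ) * -a))
            * volume (annulus Ω u.1 ∩ E) ^ (1 - p.toReal⁻¹))
          (b := fun u => ENNReal.ofReal ((2:ℝ) ^ ((u.1:ℝ) * a))
            * lorentzNormStar volume p r ((annulus Ω u.1).indicator f)) hst
        refine le_trans (mul_le_mul_right hkey _) (le_of_eq ?_)
        rw [hH, ← one_div q.toReal, ← mul_assoc]
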